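/- If x, y ∈ ℝⁿ are comonotonic (i.e., (xᵢ − xⱼ)(yᵢ − yⱼ) ≥ 0 for all i, j), then the order statistics of the sum equal the sums of order statistics: (x + y)_{i:n} = x_{i:n} + y_{i:n} for every i = 1,…,n. -/

import Mathlib

open Finset

/-- `sortVec x` is the nondecreasing rearrangement of `x`. -/
noncomputable def sortVec {n : ℕ} (x : Fin n → ℝ) : Fin n → ℝ := x ∘ Tuple.sort x

/-- If `x` and `y` are comonotonic, the order statistics of the sum equal the sums of
the order statistics. -/
theorem sortVec_add_of_comonotone {n : ℕ} (x y : Fin n → ℝ)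
    (hcom : ∀ i j : Fin n, 0 ≤ (x i - x j) * (y i - y j)) :
    ∀ i : Fin n, sortVec (x + y) i = sortVec x i + sortVec y i := by
  set σ := Tuple.sort (x + y) with hσ
  have hsum : Monotone ((x + y) ∘ σ) := Tuple.monotone_sort (x + y)
  have key : ∀ i j : Fin n, x i + y i ≤ x j + y j → x i ≤ x j ∧ y i ≤ y j := by
    intro i j h
    by_contra hc
    push_neg at hc
    have := hcom i j
    rcases le_or_gt (x i) (x j) with hx | hx
    · have hy : y j < y i := hc hx
      have hxx : x j < x i := by
        nlinarith [hcom i j]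
      linarith
    · have hy : y j ≤ y i := by nlinarith [hcom i j]
      linarith
  have hx : Monotone (x ∘ σ) := by
    intro i j hij
    exact (key (σ i) (σ j) (by have := hsum hij; simpa using this)).1
  have hy : Monotone (y ∘ σ) := by
    intro i j hij
    exact (key (σ i) (σ j) (by have := hsum hij; simpa using this)).2
  have ex : sortVec x = x ∘ σ := Tuple.unique_monotone (Tuple.monotone_sort x) hx
  have ey : sortVec y = y ∘ σ := Tuple.unique_monotone (Tuple.monotone_sort y) hy
  intro i
  rw [ex, ey]
  simp [sortVec, hσ]
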